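/- Suppose ν₁, ν₂ ∈ ℝ \ [-1,1] with ν₁ ≠ ν₂, and φ(ν_i, ·) are functions on [0,2π] satisfying (1 - cos φ/ν_i)φ(ν_i,φ) = (ϖ/2π) g(ν_i,φ) with ∫₀^{2π}φ(ν_i,φ)dφ = 1, where g(ν,φ) = 1 + 2Σ_{m=1}^L β_mγ_m(ν)cos(mφ) and γ_m(ν_i) = ∫₀^{2π}φ(ν_i,φ)cos(mφ)dφ. Then ∫₀^{2π} cos φ · φ(ν₁,φ)φ(ν₂,φ) dφ = 0. -/

import Mathlib

open MeasureTheory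
set_option maxHeartbeats 1000000

theorem discrete_eigenfunction_orthogonality
    (ϖ : ℝ) (hϖ : ϖ ∈ Set.Ioo (0:ℝ) 1) (L : ℕ) (β : ℕ → ℝ)
    (γ : ℕ → ℝ → ℝ)
    (ν₁ ν₂ : ℝ) (h1 : 1 < |ν₁|) (h2 : 1 < |ν₂|) (hne : ν₁ ≠ ν₂)
    (f : ℝ → ℝ → ℝ)
    (g : ℝ → ℝ → ℝ)
    (hg : ∀ ν φ : ℝ, g ν φ =
      1 + 2 * ∑ m ∈ Finset.Icc 1 L, β m * γ m ν * Real.cos (m * φ))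
    (heig : ∀ ν ∈ ({ν₁, ν₂} : Set ℝ), ∀ φ : ℝ,
      (1 - Real.cos φ / ν) * f ν φ = ϖ / (2 * Real.pi) * g ν φ)
    (hnorm : ∀ ν ∈ ({ν₁, ν₂} : Set ℝ),
      ∫ φ in (0:ℝ)..(2 * Real.pi), f ν φ = 1)
    (hmom : ∀ ν ∈ ({ν₁, ν₂} : Set ℝ), ∀ m : ℕ,
      γ m ν = ∫ φ in (0:ℝ)..(2 * Real.pi), f ν φ * Real.cos (m * φ)) :
    ∫ φ in (0:ℝ)..(2 * Real.pi), Real.cos φ * f ν₁ φ * f ν₂ φ = 0 := by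
  have hν₁mem : ν₁ ∈ ({ν₁, ν₂} : Set ℝ) := Or.inl rfl
  have hν₂mem : ν₂ ∈ ({ν₁, ν₂} : Set ℝ) := Or.inr rfl
  -- integrability of f ν
  have hint : ∀ ν ∈ ({ν₁, ν₂} : Set ℝ),
      IntervalIntegrable (f ν) volume 0 (2 * Real.pi) := by
    intro ν hν
    by_contra h
    have h0 := intervalIntegral.integral_undef h
    rw [hnorm ν hν] at h0
    norm_num at h0
  -- pointwise decomposition of f ν' * g ν
  have heq : ∀ ν ν' : ℝ, ∀ φ : ℝ, f ν' φ * g ν φ =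
      f ν' φ + ∑ m ∈ Finset.Icc 1 L,
        2 * (β m * γ m ν) * (f ν' φ * Real.cos (m * φ)) := by
    intro ν ν' φ
    rw [hg, mul_add, mul_one, Finset.mul_sum, Finset.mul_sum]
    congr 1
    refine Finset.sum_congr rfl fun m _ => by ring
  have hcint : ∀ ν' ∈ ({ν₁, ν₂} : Set ℝ), ∀ (c : ℝ) (m : ℕ),
      IntervalIntegrable (fun φ => c * (f ν' φ * Real.cos (m * φ)))
        volume 0 (2 * Real.pi) := by
    intro ν' hν' c m
    exact ((hint ν' hν').mul_continuousOn
      (Real.continuous_cos.comp (continuous_const.mul continuous_id)).continuousOn).const_mul c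
  have hsum : ∀ ν : ℝ, ∀ ν' ∈ ({ν₁, ν₂} : Set ℝ),
      IntervalIntegrable (fun φ => ∑ m ∈ Finset.Icc 1 L,
        2 * (β m * γ m ν) * (f ν' φ * Real.cos (m * φ))) volume 0 (2 * Real.pi) := by
    intro ν ν' hν'
    have h := IntervalIntegrable.sum (μ := volume) (a := (0:ℝ)) (b := 2 * Real.pi)
      (Finset.Icc 1 L)
      (f := fun m φ => 2 * (β m * γ m ν) * (f ν' φ * Real.cos (m * φ)))
      (fun m _ => hcint ν' hν' (2 * (β m * γ m ν)) m)
    have e : (fun φ => ∑ m ∈ Finset.Icc 1 L,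
        2 * (β m * γ m ν) * (f ν' φ * Real.cos (m * φ))) =
        ∑ m ∈ Finset.Icc 1 L, fun φ => 2 * (β m * γ m ν) * (f ν' φ * Real.cos (m * φ)) := by
      ext φ; simp
    rw [e]; exact h
  have hgint : ∀ ν : ℝ, ∀ ν' ∈ ({ν₁, ν₂} : Set ℝ),
      IntervalIntegrable (fun φ => f ν' φ * g ν φ) volume 0 (2 * Real.pi) := by
    intro ν ν' hν'
    have : (fun φ => f ν' φ * g ν φ) = fun φ => f ν' φ +
        ∑ m ∈ Finset.Icc 1 L,
          2 * (β m * γ m ν) * (f ν' φ * Real.cos (m * φ)) :=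
      funext (heq ν ν')
    rw [this]
    exact (hint ν' hν').add (hsum ν ν' hν')
  -- key integral computation
  have key : ∀ ν ∈ ({ν₁, ν₂} : Set ℝ), ∀ ν' ∈ ({ν₁, ν₂} : Set ℝ),
      (∫ φ in (0:ℝ)..(2 * Real.pi), f ν' φ * g ν φ) =
        1 + ∑ m ∈ Finset.Icc 1 L, 2 * (β m * γ m ν) * γ m ν' := by
    intro ν hν ν' hν'
    have e : (∫ φ in (0:ℝ)..(2 * Real.pi), f ν' φ * g ν φ) =
        ∫ φ in (0:ℝ)..(2 * Real.pi), (f ν' φ +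
          ∑ m ∈ Finset.Icc 1 L,
            2 * (β m * γ m ν) * (f ν' φ * Real.cos (m * φ))) := by
      congr 1
      exact funext (heq ν ν')
    rw [e, intervalIntegral.integral_add (hint ν' hν') (hsum ν ν' hν'),
      intervalIntegral.integral_finset_sum (fun m _ => hcint ν' hν' (2 * (β m * γ m ν)) m),
      hnorm ν' hν']
    congr 1
    refine Finset.sum_congr rfl fun m _ => ?_
    rw [intervalIntegral.integral_const_mul, ← hmom ν' hν' m]
  -- symmetry
  have hsym : (∫ φ in (0:ℝ)..(2 * Real.pi), f ν₂ φ * g ν₁ φ) =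
      ∫ φ in (0:ℝ)..(2 * Real.pi), f ν₁ φ * g ν₂ φ := by
    rw [key ν₁ hν₁mem ν₂ hν₂mem, key ν₂ hν₂mem ν₁ hν₁mem]
    congr 1
    exact Finset.sum_congr rfl fun m _ => by ring
  -- pointwise key identity
  have hpt : ∀ φ : ℝ, (1 / ν₂ - 1 / ν₁) * (Real.cos φ * f ν₁ φ * f ν₂ φ) =
      ϖ / (2 * Real.pi) *
        (f ν₂ φ * g ν₁ φ - f ν₁ φ * g ν₂ φ) := by
    intro φ
    have e1 := heig ν₁ hν₁mem φ
    have e2 := heig ν₂ hν₂mem φ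
    linear_combination f ν₂ φ * e1 - f ν₁ φ * e2
  have hν₁0 : ν₁ ≠ 0 := by intro h; rw [h] at h1; simp at h1; linarith
  have hν₂0 : ν₂ ≠ 0 := by intro h; rw [h] at h2; simp at h2; linarith
  have hfac : (1 / ν₂ - 1 / ν₁) ≠ 0 := by
    intro h
    apply hne
    field_simp at h
    linarith
  have main : (1 / ν₂ - 1 / ν₁) *
      (∫ φ in (0:ℝ)..(2 * Real.pi), Real.cos φ * f ν₁ φ * f ν₂ φ) = 0 := by
    rw [← intervalIntegral.integral_const_mul]
    calc (∫ φ in (0:ℝ)..(2 * Real.pi),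
          (1 / ν₂ - 1 / ν₁) * (Real.cos φ * f ν₁ φ * f ν₂ φ))
        = ∫ φ in (0:ℝ)..(2 * Real.pi), ϖ / (2 * Real.pi) *
            (f ν₂ φ * g ν₁ φ - f ν₁ φ * g ν₂ φ) := by
          congr 1; exact funext hpt
      _ = ϖ / (2 * Real.pi) *
            ((∫ φ in (0:ℝ)..(2 * Real.pi), f ν₂ φ * g ν₁ φ) -
             ∫ φ in (0:ℝ)..(2 * Real.pi), f ν₁ φ * g ν₂ φ) := by
          rw [intervalIntegral.integral_const_mul,
            intervalIntegral.integral_sub (hgint ν₁ ν₂ hν₂mem)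
              (hgint ν₂ ν₁ hν₁mem)]
      _ = 0 := by rw [hsym, sub_self, mul_zero]
  exact (mul_eq_zero.mp main).resolve_left hfac
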